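/- (Granville) Let p be an odd prime and m a positive integer not divisible by p. Then ∏_{k=1}^{m−1} C(p−1, ⌊pk/m⌋) ≡ (−1)^{(m−1)(p−1)/2} · (m^p − m + 1) (mod p²). -/

import Mathlib

open Finset

private lemma sq_zero_prod_one_sub {R : Type*} [CommRing R] {c : R} (hc : c * c = 0)
    (F : Finset ℕ) (x : ℕ → R) :
    ∏ i ∈ F, (1 - c * x i) = 1 - c * ∑ i ∈ F, x i := by
  classical
  induction F using Finset.induction_on with
  | empty => simp
  | @insert a s ha ih =>
    rw [Finset.prod_insert ha, Finset.sum_insert ha, ih]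
    linear_combination (x a * ∑ i ∈ s, x i) * hc

private lemma sq_zero_prod_add {R : Type*} [CommRing R] {c : R} (hc : c * c = 0)
    (F : Finset ℕ) (a b : ℕ → R) :
    ∏ i ∈ F, (a i + c * b i)
      = ∏ i ∈ F, a i + c * ∑ i ∈ F, b i * ∏ j ∈ F.erase i, a j := by
  classical
  induction F using Finset.induction_on with
  | empty => simp
  | @insert k s hk ih =>
    have hrw : ∑ i ∈ s, b i * ∏ j ∈ (insert k s).erase i, a j
        = a k * ∑ i ∈ s, b i * ∏ j ∈ s.erase i, a j := by
      rw [Finset.mul_sum]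
      refine Finset.sum_congr rfl fun i hi => ?_
      rw [Finset.erase_insert_of_ne (by rintro rfl; exact hk hi),
        Finset.prod_insert (fun h => hk (Finset.mem_of_mem_erase h))]
      ring
    rw [Finset.prod_insert hk, Finset.prod_insert hk, Finset.sum_insert hk, ih,
      Finset.erase_insert hk, hrw]
    linear_combination (b k * ∑ i ∈ s, b i * ∏ j ∈ s.erase i, a j) * hc

private lemma image_self_of_inj (F : Finset ℕ) (g : ℕ → ℕ)
    (hmaps : ∀ i ∈ F, g i ∈ F) (hinj : Set.InjOn g F) : F.image g = F := by
  refine Finset.eq_of_subset_of_card_le ?_ ?_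
  · intro x hx
    obtain ⟨i, hi, rfl⟩ := Finset.mem_image.mp hx
    exact hmaps i hi
  · rw [Finset.card_image_of_injOn hinj]

private lemma jf_lt (p m k : ℕ) (hm : 0 < m) (hkm : k < m) (hp0 : 0 < p) :
    p * k / m < p := by
  rw [Nat.div_lt_iff_lt_mul hm]
  exact (Nat.mul_lt_mul_left hp0).mpr hkm

private lemma jrefl (p m k : ℕ) (hp : p.Prime) (hm : 0 < m) (hpm : ¬ p ∣ m)
    (hk1 : 1 ≤ k) (hkm : k < m) :
    p * (m - k) / m = p - 1 - p * k / m := by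
  set q := p * k / m with hq
  set r := p * k % m with hr
  have hd : m * q + r = p * k := Nat.div_add_mod (p * k) m
  have hrm : r < m := Nat.mod_lt _ hm
  have hr0 : r ≠ 0 := by
    intro h0
    have hdvd : m ∣ p * k := Nat.dvd_of_mod_eq_zero h0
    have hmp : Nat.Coprime m p := (Nat.coprime_comm.mp ((Nat.Prime.coprime_iff_not_dvd hp).mpr hpm))
    have : m ∣ k := hmp.dvd_of_dvd_mul_left hdvd
    have := Nat.le_of_dvd (by omega) this
    omega
  have hqp : q < p := jf_lt p m k hm hkm hp.pos
  have hid : p * (m - k) = (m - r) + (p - 1 - q) * m := by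
    have h1 : k ≤ m := hkm.le
    have h2 : r ≤ m := hrm.le
    have h3 : q + 1 ≤ p := hqp
    zify [h1, h2, (by omega : 1 + q ≤ p), Nat.sub_sub]
    have hd' : (m : ℤ) * q + r = p * k := by exact_mod_cast hd
    linarith [hd']
  rw [hid, Nat.add_mul_div_right _ _ hm, Nat.div_eq_of_lt (by omega), Nat.zero_add]

private lemma sum_jf (p m : ℕ) (hp : p.Prime) (hm : 0 < m) (hpm : ¬ p ∣ m) :
    ∑ k ∈ Finset.Ico 1 m, p * k / m = (m - 1) * (p - 1) / 2 := by
  set S := ∑ k ∈ Finset.Ico 1 m, p * k / m with hS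
  have hrefl : S = ∑ k ∈ Finset.Ico 1 m, p * (m - k) / m := by
    rw [hS]
    have himg := image_self_of_inj (Finset.Ico 1 m) (fun k => m - k)
      (fun i hi => by simp only [Finset.mem_Ico] at *; omega)
      (fun i hi j hj h => by simp only [Finset.coe_Ico, Set.mem_Ico] at *; omega)
    conv_lhs => rw [← himg]
    rw [Finset.sum_image (fun i hi j hj h => by simp only [Finset.coe_Ico, Set.mem_Ico] at *; omega)]
  have h2 : 2 * S = (m - 1) * (p - 1) := by
    have : 2 * S = S + S := by ring
    rw [this]
    nth_rewrite 2 [hrefl]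
    rw [hS, ← Finset.sum_add_distrib]
    have : ∀ k ∈ Finset.Ico 1 m, p * k / m + p * (m - k) / m = p - 1 := by
      intro k hk
      simp only [Finset.mem_Ico] at hk
      rw [jrefl p m k hp hm hpm hk.1 hk.2]
      have hlt := jf_lt p m k hm hk.2 hp.pos
      generalize p * k / m = q at hlt ⊢
      omega
    rw [Finset.sum_congr rfl this, Finset.sum_const, Nat.card_Ico, smul_eq_mul]
  omega


private lemma psq_zero (p : ℕ) : ((p : ZMod (p^2)) * (p : ZMod (p^2))) = 0 := by
  rw [← Nat.cast_mul, ← sq, ZMod.natCast_self]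

private lemma unit_of_lt (p i : ℕ) (hp : p.Prime) (h1 : 1 ≤ i) (h2 : i < p) :
    IsUnit (i : ZMod (p^2)) := by
  rw [ZMod.isUnit_iff_coprime]
  have : p.Coprime i := (Nat.Prime.coprime_iff_not_dvd hp).mpr
    (fun h => by have := Nat.le_of_dvd (by omega) h; omega)
  exact (Nat.coprime_comm.mp this).pow_right 2

private lemma binom_mod (p : ℕ) (hp : p.Prime) :
    ∀ j, j ≤ p - 1 → ((p-1).choose j : ZMod (p^2))
      = (-1)^j * (1 - p * ∑ i ∈ Finset.Icc 1 j, (i : ZMod (p^2))⁻¹) := by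
  intro j
  induction j with
  | zero => simp
  | succ j ih =>
    intro hj
    have hp1 : 1 ≤ p := hp.pos
    have hj' : j ≤ p - 1 := by omega
    have hu : IsUnit ((j+1 : ℕ) : ZMod (p^2)) := unit_of_lt p (j+1) hp (by omega) (by omega)
    refine hu.mul_right_cancel ?_
    have key : (((p-1).choose (j+1) : ℕ) : ZMod (p^2)) * ((j+1 : ℕ) : ZMod (p^2))
        = (((p-1).choose j : ℕ) : ZMod (p^2)) * (((p-1) - j : ℕ) : ZMod (p^2)) := by
      rw [← Nat.cast_mul, ← Nat.cast_mul, Nat.choose_succ_right_eq]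
    rw [key, ih hj', Finset.sum_Icc_succ_top (by omega : 1 ≤ j+1)]
    have hcast : (((p-1) - j : ℕ) : ZMod (p^2)) = (p : ZMod (p^2)) - 1 - j := by
      rw [Nat.cast_sub hj', Nat.cast_sub hp1]
      push_cast
      ring
    have huv : ((j+1 : ℕ) : ZMod (p^2)) * ((j+1 : ℕ) : ZMod (p^2))⁻¹ = 1 :=
      ZMod.mul_inv_of_unit _ hu
    have hp2 := psq_zero p
    rw [hcast]
    push_cast at huv ⊢
    rw [pow_succ (-1 : ZMod (p^2)) j]
    linear_combination (-(-1:ZMod (p^2))^j * (p : ZMod (p^2))) * huv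
      - ((-1:ZMod (p^2))^j * ∑ i ∈ Finset.Icc 1 j, (i : ZMod (p^2))⁻¹) * hp2


private lemma pmul_iff (p : ℕ) (hp : p.Prime) (x y : ZMod (p^2)) :
    (p : ZMod (p^2)) * x = (p : ZMod (p^2)) * y ↔
      (ZMod.castHom (dvd_pow_self p two_ne_zero) (ZMod p)) x
        = (ZMod.castHom (dvd_pow_self p two_ne_zero) (ZMod p)) y := by
  haveI : NeZero (p^2) := ⟨pow_ne_zero 2 hp.ne_zero⟩
  have hx : ((x.val : ℕ) : ZMod (p^2)) = x := ZMod.natCast_rightInverse x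
  have hy : ((y.val : ℕ) : ZMod (p^2)) = y := ZMod.natCast_rightInverse y
  have hfx : (ZMod.castHom (dvd_pow_self p two_ne_zero) (ZMod p)) x = ((x.val : ℕ) : ZMod p) := by
    conv_lhs => rw [← hx]
    rw [map_natCast]
  have hfy : (ZMod.castHom (dvd_pow_self p two_ne_zero) (ZMod p)) y = ((y.val : ℕ) : ZMod p) := by
    conv_lhs => rw [← hy]
    rw [map_natCast]
  rw [hfx, hfy, ZMod.natCast_eq_natCast_iff]
  conv_lhs => rw [← hx, ← hy]
  rw [← Nat.cast_mul, ← Nat.cast_mul, ZMod.natCast_eq_natCast_iff]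
  obtain ⟨a, ha⟩ : ∃ a, x.val = a := ⟨_, rfl⟩
  obtain ⟨b, hb⟩ : ∃ b, y.val = b := ⟨_, rfl⟩
  rw [ha, hb, (sq p : p^2 = p * p)]
  constructor
  · exact fun h => Nat.ModEq.mul_left_cancel' hp.ne_zero h
  · exact fun h => Nat.ModEq.mul_left' p h

private lemma phi_inv (p i : ℕ) (hp : p.Prime) (h1 : 1 ≤ i) (h2 : i < p) :
    (ZMod.castHom (dvd_pow_self p two_ne_zero) (ZMod p)) ((i : ZMod (p^2))⁻¹)
      = (i : ZMod p)⁻¹ := by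
  haveI : Fact p.Prime := ⟨hp⟩
  have hu : IsUnit (i : ZMod (p^2)) := by
    rw [ZMod.isUnit_iff_coprime]
    have : p.Coprime i := (Nat.Prime.coprime_iff_not_dvd hp).mpr
      (fun h => by have := Nat.le_of_dvd (by omega) h; omega)
    exact (Nat.coprime_comm.mp this).pow_right 2
  have huv : (i : ZMod (p^2)) * (i : ZMod (p^2))⁻¹ = 1 := ZMod.mul_inv_of_unit _ hu
  have := congrArg (ZMod.castHom (dvd_pow_self p two_ne_zero) (ZMod p)) huv
  rw [map_mul, map_one, map_natCast] at this
  exact eq_inv_of_mul_eq_one_right this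


private lemma sum_inv_zero (p : ℕ) (hp : p.Prime) (hodd : Odd p) :
    ∑ i ∈ Finset.Ico 1 p, (i : ZMod p)⁻¹ = 0 := by
  haveI : Fact p.Prime := ⟨hp⟩
  have hp2 : 2 ≤ p := hp.two_le
  have hne : ∀ i ∈ Finset.Ico 1 p, (i : ZMod p) ≠ 0 := by
    intro i hi h0
    simp only [Finset.mem_Ico] at hi
    rw [ZMod.natCast_eq_zero_iff] at h0
    have := Nat.le_of_dvd (by omega) h0
    omega
  set g : ℕ → ℕ := fun i => ((i : ZMod p)⁻¹).val with hg
  have hgmem : ∀ i ∈ Finset.Ico 1 p, g i ∈ Finset.Ico 1 p := by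
    intro i hi
    simp only [Finset.mem_Ico, hg]
    constructor
    · have h0 : (i : ZMod p)⁻¹ ≠ 0 := inv_ne_zero (hne i hi)
      exact Nat.one_le_iff_ne_zero.mpr (fun h => h0 ((ZMod.val_eq_zero _).mp h))
    · exact ZMod.val_lt _
  have hcastg : ∀ i, ((g i : ℕ) : ZMod p) = (i : ZMod p)⁻¹ := by
    intro i
    exact ZMod.natCast_rightInverse _
  have hginj : Set.InjOn g (Finset.Ico 1 p) := by
    intro i hi j hj h
    simp only [Finset.coe_Ico, Set.mem_Ico] at hi hj
    have h2 : (i : ZMod p)⁻¹ = (j : ZMod p)⁻¹ := by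
      rw [← hcastg i, ← hcastg j, h]
    have h3 : (i : ZMod p) = (j : ZMod p) := by
      have := congrArg (·⁻¹) h2
      simpa using this
    rw [ZMod.natCast_eq_natCast_iff] at h3
    exact h3.eq_of_lt_of_lt hi.2 hj.2
  have key : ∑ i ∈ Finset.Ico 1 p, (i : ZMod p)⁻¹ = ∑ i ∈ Finset.Ico 1 p, (i : ZMod p) := by
    conv_rhs => rw [← image_self_of_inj (Finset.Ico 1 p) g hgmem hginj]
    rw [Finset.sum_image (fun i hi j hj h => hginj (by simpa using hi) (by simpa using hj) h)]
    exact Finset.sum_congr rfl fun i _ => (hcastg i).symm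
  rw [key]
  obtain ⟨u, hu⟩ := hodd
  have hsum : ∑ i ∈ Finset.Ico 1 p, i = p * u := by
    have h1 : ∑ i ∈ Finset.Ico 1 p, i = ∑ i ∈ Finset.range p, i := by
      rw [Finset.range_eq_Ico, ← Finset.sum_Ico_consecutive _ (by omega : 0 ≤ 1) (by omega : 1 ≤ p)]
      simp
    have h2 := Finset.sum_range_id_mul_two p
    have h3 : p * (p - 1) = (p * u) * 2 := by
      have : p - 1 = 2 * u := by omega
      rw [this]; ring
    omega
  rw [← Nat.cast_sum, hsum]
  push_cast [ZMod.natCast_self]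
  ring

private lemma lerch_formula (p m c : ℕ) (hp : p.Prime) (hpm : ¬ p ∣ m)
    (hc : m ^ (p-1) = 1 + p * c) :
    ∑ i ∈ Finset.Ico 1 p, ((m * i / p : ℕ) : ZMod p) * (i : ZMod p)⁻¹
      = (m : ZMod p) * c := by
  haveI : Fact p.Prime := ⟨hp⟩
  have hp2 : 2 ≤ p := hp.two_le
  set K := ZMod p
  set R := ZMod (p^2)
  set φ := ZMod.castHom (dvd_pow_self p two_ne_zero) (ZMod p) with hφ
  set s : ℕ → ℕ := fun i => m * i % p with hs
  set t : ℕ → ℕ := fun i => m * i / p with ht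
  have hmK : (m : K) ≠ 0 := by
    intro h
    rw [ZMod.natCast_eq_zero_iff] at h
    exact hpm h
  have hndvd : ∀ i ∈ Finset.Ico 1 p, ¬ p ∣ m * i := by
    intro i hi hdvd
    simp only [Finset.mem_Ico] at hi
    rcases (Nat.Prime.dvd_mul hp).mp hdvd with h | h
    · exact hpm h
    · have := Nat.le_of_dvd (by omega) h; omega
  have hsmem : ∀ i ∈ Finset.Ico 1 p, s i ∈ Finset.Ico 1 p := by
    intro i hi
    simp only [Finset.mem_Ico, hs]
    refine ⟨?_, Nat.mod_lt _ (by omega)⟩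
    rcases Nat.eq_zero_or_pos (m * i % p) with h | h
    · exact absurd (Nat.dvd_of_mod_eq_zero h) (hndvd i hi)
    · omega
  have hscast : ∀ i, ((s i : ℕ) : K) = (m : K) * (i : K) := by
    intro i
    simp only [hs]
    rw [ZMod.natCast_mod, Nat.cast_mul]
  have hsinj : Set.InjOn s (Finset.Ico 1 p) := by
    intro i hi j hj h
    simp only [Finset.coe_Ico, Set.mem_Ico] at hi hj
    have h2 : (m : K) * (i : K) = (m : K) * (j : K) := by
      rw [← hscast i, ← hscast j, h]
    have h3 := mul_left_cancel₀ hmK h2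
    rw [ZMod.natCast_eq_natCast_iff] at h3
    exact h3.eq_of_lt_of_lt hi.2 hj.2
  -- the ℕ product identity
  have hprodN : ∏ i ∈ Finset.Ico 1 p, (m * i) = m^(p-1) * ∏ i ∈ Finset.Ico 1 p, i := by
    rw [Finset.prod_mul_distrib, Finset.prod_const, Nat.card_Ico]
  set Q : R := ∏ i ∈ Finset.Ico 1 p, (i : R) with hQ
  set T : R := ∑ i ∈ Finset.Ico 1 p, ((t i : ℕ) : R) * ∏ j ∈ (Finset.Ico 1 p).erase i, ((s j : ℕ) : R) with hT
  have hcastprod : (∏ i ∈ Finset.Ico 1 p, ((m * i : ℕ) : R)) = ((m^(p-1) : ℕ) : R) * Q := by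
    rw [hQ, ← Nat.cast_prod, ← Nat.cast_prod, ← Nat.cast_mul, hprodN]
  have hfac : ∀ i ∈ Finset.Ico 1 p, ((m * i : ℕ) : R) = ((s i : ℕ) : R) + (p : R) * ((t i : ℕ) : R) := by
    intro i _
    have h := congrArg (Nat.cast : ℕ → R) (Nat.div_add_mod (m * i) p)
    push_cast at h
    simp only [hs, ht]
    push_cast
    erw [Nat.cast_mul]
    linear_combination -h
  have htot : ((m^(p-1) : ℕ) : R) * Q = Q + (p : R) * T := by
    rw [← hcastprod, Finset.prod_congr rfl hfac, sq_zero_prod_add (psq_zero p), hT]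
    congr 1
    rw [hQ]
    conv_rhs => rw [← image_self_of_inj (Finset.Ico 1 p) s hsmem hsinj,
      Finset.prod_image (fun i hi j hj h => hsinj (by simpa using hi) (by simpa using hj) h)]
  have hcastc : ((m^(p-1) : ℕ) : R) = 1 + (p : R) * (c : R) := by
    rw [hc, Nat.cast_add, Nat.cast_one]
    erw [Nat.cast_mul]
  have hpq : (p : R) * ((c : R) * Q) = (p : R) * T := by
    linear_combination htot - Q * hcastc
  have hKeq := (pmul_iff p hp _ _).mp hpq
  simp only [hQ, hT] at hKeq
  simp only [map_mul, map_sum, map_prod, map_natCast] at hKeq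
  -- hKeq : (c:K) * ∏ (i:K) = ∑ (t i:K) * ∏_{erase} (s j:K)
  have hneK : ∀ i ∈ Finset.Ico 1 p, (i : K) ≠ 0 := by
    intro i hi h0
    simp only [Finset.mem_Ico] at hi
    rw [ZMod.natCast_eq_zero_iff] at h0
    have := Nat.le_of_dvd (by omega) h0
    omega
  have hQK0 : (∏ i ∈ Finset.Ico 1 p, (i : K)) ≠ 0 := Finset.prod_ne_zero_iff.mpr hneK
  set L : K := ∑ i ∈ Finset.Ico 1 p, ((t i : ℕ) : K) * (i : K)⁻¹ with hL
  have hTK : ∑ i ∈ Finset.Ico 1 p, ((t i : ℕ) : K) * ∏ j ∈ (Finset.Ico 1 p).erase i, ((s j : ℕ) : K)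
      = L * ((m : K)^(p-2) * (∏ i ∈ Finset.Ico 1 p, (i : K))) := by
    rw [hL, Finset.sum_mul]
    refine Finset.sum_congr rfl fun i hi => ?_
    have hiK : (i : K) ≠ 0 := hneK i hi
    have herase : ∏ j ∈ (Finset.Ico 1 p).erase i, ((s j : ℕ) : K)
        = (m : K)^(p-2) * ((i : K)⁻¹ * (∏ i ∈ Finset.Ico 1 p, (i : K))) := by
      rw [Finset.prod_congr rfl (fun j _ => hscast j), Finset.prod_mul_distrib,
        Finset.prod_const, Finset.card_erase_of_mem hi, Nat.card_Ico]
      have h2 : (i : K) * ∏ j ∈ (Finset.Ico 1 p).erase i, (j : K) = (∏ i ∈ Finset.Ico 1 p, (i : K)) :=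
        Finset.mul_prod_erase _ _ hi
      have h3 : ∏ j ∈ (Finset.Ico 1 p).erase i, (j : K) = (i : K)⁻¹ * (∏ i ∈ Finset.Ico 1 p, (i : K)) := by
        rw [← h2, inv_mul_cancel_left₀ hiK]
      rw [h3, show p - 1 - 1 = p - 2 from rfl]
    rw [herase]
    ring
  rw [hTK] at hKeq
  have hcancel : (c : K) = L * (m : K)^(p-2) := by
    have h4 : (c : K) * (∏ i ∈ Finset.Ico 1 p, (i : K)) = (L * (m : K)^(p-2)) * (∏ i ∈ Finset.Ico 1 p, (i : K)) := by
      rw [hKeq]; ring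
    exact mul_right_cancel₀ hQK0 h4
  have hm1 : (m : K)^(p-1) = 1 := by
    have h5 : ((m^(p-1) : ℕ) : K) = ((1 + p * c : ℕ) : K) := by rw [hc]
    push_cast at h5
    rw [h5]
    have h6 : ((p * c : ℕ) : K) = 0 := (ZMod.natCast_eq_zero_iff _ _).mpr (dvd_mul_right p c)
    rw [h6]
    ring
  have hexp : (m : K) * (m : K)^(p-2) = (m : K)^(p-1) := by
    rw [← pow_succ']
    congr 1
    omega
  have : (m : K) * (c : K) = L := by
    rw [hcancel]
    calc (m:K) * (L * (m:K)^(p-2)) = L * ((m:K) * (m:K)^(p-2)) := by ring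
    _ = L * (m:K)^(p-1) := by rw [hexp]
    _ = L := by rw [hm1, mul_one]
  rw [this, hL]

theorem stmt_17 (p m : ℕ) (hp : p.Prime) (hodd : Odd p) (hm : 0 < m)
    (hpm : ¬ p ∣ m) :
    (∏ k ∈ Finset.Ico 1 m, (Nat.choose (p - 1) (p * k / m) : ℤ))
      ≡ (-1) ^ ((m - 1) * (p - 1) / 2) * ((m : ℤ) ^ p - m + 1)
        [ZMOD (p : ℤ) ^ 2] := by
  haveI : Fact p.Prime := ⟨hp⟩
  have hmod : ((p : ℤ))^2 = ((p^2 : ℕ) : ℤ) := by push_cast; ring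
  rw [hmod, ← ZMod.intCast_eq_intCast_iff]
  push_cast
  -- Fermat quotient
  have hm1 : 1 ≤ m := hm
  have hmpow : 1 ≤ m ^ (p - 1) := Nat.one_le_pow _ _ hm
  obtain ⟨c, hc⟩ : ∃ c, m ^ (p - 1) = 1 + p * c := by
    have hcop : Nat.Coprime m p := Nat.coprime_comm.mp ((Nat.Prime.coprime_iff_not_dvd hp).mpr hpm)
    have heuler := Nat.ModEq.pow_totient hcop
    rw [Nat.totient_prime hp] at heuler
    have hdvd : p ∣ m ^ (p - 1) - 1 := (Nat.modEq_iff_dvd' hmpow).mp heuler.symm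
    obtain ⟨c, hc0⟩ := hdvd
    exact ⟨c, by omega⟩
  have hbound : ∀ k ∈ Finset.Ico 1 m, p * k / m ≤ p - 1 := by
    intro k hk
    simp only [Finset.mem_Ico] at hk
    have := jf_lt p m k hm hk.2 hp.pos
    omega
  rw [Finset.prod_congr rfl (fun k hk => binom_mod p hp _ (hbound k hk)),
    Finset.prod_mul_distrib, Finset.prod_pow_eq_pow_sum, sum_jf p m hp hm hpm,
    sq_zero_prod_one_sub (psq_zero p)]
  congr 1
  -- remains : 1 - p * S = m^p - m + 1
  set S : ZMod (p^2) := ∑ k ∈ Finset.Ico 1 m, ∑ i ∈ Finset.Icc 1 (p * k / m), (i : ZMod (p^2))⁻¹ with hS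
  -- swap the double sum
  have hswap : S = ∑ i ∈ Finset.Ico 1 p, ((m - 1 - m * i / p : ℕ) : ZMod (p^2)) * (i : ZMod (p^2))⁻¹ := by
    have hIcc : ∀ k ∈ Finset.Ico 1 m, Finset.Icc 1 (p * k / m)
        = Finset.filter (fun i => i ≤ p * k / m) (Finset.Ico 1 p) := by
      intro k hk
      simp only [Finset.mem_Ico] at hk
      have hlt := jf_lt p m k hm hk.2 hp.pos
      ext i
      simp only [Finset.mem_Icc, Finset.mem_filter, Finset.mem_Ico]
      omega
    rw [hS, Finset.sum_congr rfl (fun k hk => by rw [hIcc k hk, Finset.sum_filter]),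
      Finset.sum_comm]
    refine Finset.sum_congr rfl fun i hi => ?_
    simp only [Finset.mem_Ico] at hi
    have hfilter : Finset.filter (fun k => i ≤ p * k / m) (Finset.Ico 1 m)
        = Finset.Ico (m * i / p + 1) m := by
      ext k
      simp only [Finset.mem_filter, Finset.mem_Ico]
      have hne : m * i ≠ p * k := by
        intro h
        have hdd : p ∣ m * i := Dvd.intro k h.symm
        rcases (Nat.Prime.dvd_mul hp).mp hdd with h' | h'
        · exact hpm h'
        · have := Nat.le_of_dvd (by omega) h'; omega
      constructor
      · rintro ⟨⟨hk1, hk2⟩, hik⟩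
        have h1 : i * m ≤ p * k := (Nat.le_div_iff_mul_le hm).mp hik
        have h2 : m * i < p * k := by
          have : m * i = i * m := Nat.mul_comm m i
          omega
        have h3 : m * i / p < k := (Nat.div_lt_iff_lt_mul hp.pos).mpr
          (by rw [Nat.mul_comm k p]; omega)
        exact ⟨h3, hk2⟩
      · rintro ⟨hk1, hk2⟩
        have h3 : m * i / p < k := Nat.lt_of_lt_of_le (Nat.lt_succ_self _) hk1
        have h2 : m * i < k * p := (Nat.div_lt_iff_lt_mul hp.pos).mp h3
        have h1 : i * m ≤ p * k := by
          have e1 : m * i = i * m := Nat.mul_comm m i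
          have e2 : k * p = p * k := Nat.mul_comm k p
          omega
        have hk0 : 1 ≤ k := le_trans (Nat.le_add_left 1 (m * i / p)) hk1
        exact ⟨⟨hk0, hk2⟩, (Nat.le_div_iff_mul_le hm).mpr h1⟩
    rw [← Finset.sum_filter, hfilter, Finset.sum_const, Nat.card_Ico, nsmul_eq_mul,
      show m - (m * i / p + 1) = m - 1 - m * i / p from by generalize m * i / p = t; omega]
  -- the p-adic step
  have hppred : p - 1 + 1 = p := by have := hp.pos; omega
  have hcastc : ((m ^ (p - 1) : ℕ) : ZMod (p^2)) = 1 + (p : ZMod (p^2)) * (c : ZMod (p^2)) := by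
    rw [hc]; push_cast; ring
  have hmpR : (m : ZMod (p^2)) ^ p
      = (m : ZMod (p^2)) + (p : ZMod (p^2)) * ((m : ZMod (p^2)) * (c : ZMod (p^2))) := by
    have h1 : (m : ZMod (p^2)) ^ p = (m : ZMod (p^2)) ^ (p - 1) * (m : ZMod (p^2)) := by
      rw [← pow_succ, hppred]
    have h2 : (m : ZMod (p^2)) ^ (p - 1) = ((m ^ (p - 1) : ℕ) : ZMod (p^2)) := by push_cast; ring
    rw [h1, h2, hcastc]
    ring
  have hkey : (p : ZMod (p^2)) * S
      = (p : ZMod (p^2)) * (-((m : ZMod (p^2)) * (c : ZMod (p^2)))) := by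
    rw [pmul_iff p hp]
    have hphiS : (ZMod.castHom (dvd_pow_self p two_ne_zero) (ZMod p)) S
        = ∑ i ∈ Finset.Ico 1 p, ((m - 1 - m * i / p : ℕ) : ZMod p) * (i : ZMod p)⁻¹ := by
      rw [hswap, map_sum]
      refine Finset.sum_congr rfl fun i hi => ?_
      simp only [Finset.mem_Ico] at hi
      rw [map_mul, map_natCast, phi_inv p i hp hi.1 hi.2]
    rw [hphiS, map_neg, map_mul, map_natCast, map_natCast]
    have hsplit : ∀ i ∈ Finset.Ico 1 p, ((m - 1 - m * i / p : ℕ) : ZMod p)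
        = ((m - 1 : ℕ) : ZMod p) - ((m * i / p : ℕ) : ZMod p) := by
      intro i hi
      simp only [Finset.mem_Ico] at hi
      have hti : m * i / p < m := by
        rw [Nat.div_lt_iff_lt_mul hp.pos]
        exact Nat.mul_lt_mul_of_le_of_lt (le_refl m) hi.2 (by omega)
      exact Nat.cast_sub (by omega : m * i / p ≤ m - 1)
    rw [Finset.sum_congr rfl (fun i hi => by rw [hsplit i hi, sub_mul])]
    rw [Finset.sum_sub_distrib, ← Finset.mul_sum, sum_inv_zero p hp hodd, mul_zero,
      lerch_formula p m c hp hpm hc]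
    ring
  linear_combination -hkey - hmpR
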